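/- Let V : L^1([0,1]) → C([0,1]) be the Volterra operator. For every integer n ≥ 2, the n-th approximation number of V equals 1/2: inf{‖V − S‖ : S : L^1([0,1]) → C([0,1]) a bounded linear operator with rank(S) ≤ n − 1} = 1/2. -/

import Mathlib

open MeasureTheory Set

noncomputable def mu01 : Measure ℝ := volume.restrict (Icc (0:ℝ) 1)

instance : IsFiniteMeasure mu01 := by
  constructor
  simp [mu01, Real.volume_Icc]

lemma mu01_Ioc {a b : ℝ} (ha : 0 ≤ a) (hb : b ≤ 1) :
    mu01 (Ioc a b) = ENNReal.ofReal (b - a) := by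
  rw [mu01, Measure.restrict_apply measurableSet_Ioc,
    inter_eq_left.2 (Ioc_subset_Icc_self.trans (Icc_subset_Icc ha hb)),
    Real.volume_Ioc]

noncomputable def ck (k : ℕ) : ℝ := (1/2 : ℝ)^k

lemma ck_pos (k : ℕ) : 0 < ck k := by unfold ck; positivity
lemma ck_le_one (k : ℕ) : ck k ≤ 1 := pow_le_one₀ (by norm_num) (by norm_num)
lemma ck_anti {j k : ℕ} (h : j ≤ k) : ck k ≤ ck j :=
  pow_le_pow_of_le_one (by norm_num) (by norm_num) h
lemma ck_succ (k : ℕ) : ck (k+1) = ck k / 2 := by simp [ck, pow_succ]; ring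

/-- normalized indicator of the `k`-th dyadic interval -/
noncomputable def fk (k : ℕ) : Lp ℝ 1 mu01 :=
  indicatorConstLp 1 measurableSet_Ioc (measure_ne_top mu01 _) ((2:ℝ)^(k+1)) (s := Ioc (ck (k+1)) (ck k))

lemma mu01_Ik (k : ℕ) : mu01 (Ioc (ck (k+1)) (ck k)) = ENNReal.ofReal (ck (k+1)) := by
  rw [mu01_Ioc (ck_pos _).le (ck_le_one _), ck_succ]; ring_nf

lemma norm_fk (k : ℕ) : ‖fk k‖ = 1 := by
  rw [fk, norm_indicatorConstLp one_ne_zero ENNReal.one_ne_top, measureReal_def, mu01_Ik]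
  rw [ENNReal.toReal_ofReal (ck_pos _).le]
  simp [ck, Real.norm_eq_abs, abs_of_pos]

lemma integral_fk_self (k : ℕ) :
    ∫ t in Ioc (0:ℝ) (ck k), (fk k : ℝ → ℝ) t ∂mu01 = 1 := by
  rw [fk, setIntegral_indicatorConstLp measurableSet_Ioc measurableSet_Ioc (measure_ne_top _ _)]
  rw [inter_eq_left.2 (Ioc_subset_Ioc (ck_pos _).le le_rfl), measureReal_def, mu01_Ik,
    ENNReal.toReal_ofReal (ck_pos _).le]
  simp [ck, smul_eq_mul, ← mul_pow]

lemma integral_fk_zero {j k : ℕ} (h : j < k) :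
    ∫ t in Ioc (0:ℝ) (ck k), (fk j : ℝ → ℝ) t ∂mu01 = 0 := by
  rw [fk, setIntegral_indicatorConstLp measurableSet_Ioc measurableSet_Ioc (measure_ne_top _ _)]
  have : Ioc (ck (j+1)) (ck j) ∩ Ioc (0:ℝ) (ck k) = ∅ := by
    apply eq_empty_iff_forall_notMem.2
    rintro x ⟨⟨h1, _⟩, ⟨_, h4⟩⟩
    exact absurd (h4.trans (ck_anti h)) (not_le.2 h1)
  rw [this]
  simp

lemma lower_bound (V S : Lp ℝ 1 mu01 →L[ℝ] C(Icc (0:ℝ) 1, ℝ))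
    (hV : ∀ (f : Lp ℝ 1 mu01) (x : Icc (0:ℝ) 1),
      V f x = ∫ t in Ioc (0:ℝ) (x:ℝ), (f : ℝ → ℝ) t ∂mu01)
    (hfin : FiniteDimensional ℝ (LinearMap.range (S : Lp ℝ 1 mu01 →ₗ[ℝ] C(Icc (0:ℝ) 1, ℝ)))) :
    1/2 ≤ ‖V - S‖ := by
  have key : ∀ j k : ℕ, j < k → ∀ ε : ℝ, 0 < ε →
      ‖S (fk j) - S (fk k)‖ < 2 * ε → 1/2 ≤ ‖V - S‖ + ε := by
    intro j k hjk ε hε hS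
    set x₀ : Icc (0:ℝ) 1 := ⟨ck k, ⟨(ck_pos k).le, ck_le_one k⟩⟩ with hx₀
    have hVj : V (fk j) x₀ = 0 := by rw [hV]; exact integral_fk_zero hjk
    have hVk : V (fk k) x₀ = 1 := by rw [hV]; exact integral_fk_self k
    set h : Lp ℝ 1 mu01 := fk j - fk k with hh
    have hval : ((V - S) h) x₀ = -1 - (S (fk j) - S (fk k)) x₀ := by
      simp only [hh, ContinuousLinearMap.sub_apply, map_sub, ContinuousMap.sub_apply,
        hVj, hVk]
      ring
    have hd : |(S (fk j) - S (fk k)) x₀| < 2 * ε := by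
      calc |(S (fk j) - S (fk k)) x₀| ≤ ‖S (fk j) - S (fk k)‖ :=
            (S (fk j) - S (fk k)).norm_coe_le_norm x₀
        _ < 2 * ε := hS
    have h1 : 1 - 2 * ε ≤ |((V - S) h) x₀| := by
      rw [hval]
      have := abs_sub_abs_le_abs_sub (-1 : ℝ) ((S (fk j) - S (fk k)) x₀)
      have habs : |(-1 : ℝ)| = 1 := by norm_num
      have := abs_abs_sub_abs_le_abs_sub (-1 : ℝ) ((S (fk j) - S (fk k)) x₀)
      calc 1 - 2*ε ≤ |(-1:ℝ)| - |(S (fk j) - S (fk k)) x₀| := by rw [habs]; linarith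
        _ ≤ |(-1:ℝ) - (S (fk j) - S (fk k)) x₀| := abs_sub_abs_le_abs_sub _ _
    have h2 : |((V - S) h) x₀| ≤ ‖(V - S) h‖ := ((V - S) h).norm_coe_le_norm x₀
    have h3 : ‖(V - S) h‖ ≤ ‖V - S‖ * 2 := by
      calc ‖(V - S) h‖ ≤ ‖V - S‖ * ‖h‖ := (V - S).le_opNorm h
        _ ≤ ‖V - S‖ * 2 := by
          have hb : ‖h‖ ≤ 2 := by calc ‖h‖ ≤ ‖fk j‖ + ‖fk k‖ := norm_sub_le _ _
            _ = 2 := by rw [norm_fk, norm_fk]; norm_num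
          exact mul_le_mul_of_nonneg_left hb (norm_nonneg (V - S))
    linarith
  refine le_of_forall_pos_le_add ?_
  intro ε hε
  set E := ↥(LinearMap.range (S : Lp ℝ 1 mu01 →ₗ[ℝ] C(Icc (0:ℝ) 1, ℝ)))
  have : FiniteDimensional ℝ E := hfin
  set g : ℕ → E := fun k => ⟨S (fk k), LinearMap.mem_range_self _ _⟩ with hg
  have hgmem : ∀ k, g k ∈ Metric.closedBall (0 : E) ‖S‖ := by
    intro k
    rw [Metric.mem_closedBall, dist_zero_right]
    show ‖S (fk k)‖ ≤ ‖S‖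
    calc ‖S (fk k)‖ ≤ ‖S‖ * ‖fk k‖ := S.le_opNorm _
      _ = ‖S‖ := by rw [norm_fk, mul_one]
  have htb : TotallyBounded (Metric.closedBall (0 : E) ‖S‖) :=
    (isCompact_closedBall _ _).totallyBounded
  obtain ⟨t, htfin, htsub⟩ := (Metric.totallyBounded_iff.1 htb) ε hε
  have hmem : ∀ k : ℕ, ∃ c ∈ t, g k ∈ Metric.ball c ε := by
    intro k
    have := htsub (hgmem k)
    simpa using this
  choose y hy hball using hmem
  haveI : Finite ↥t := htfin.to_subtype
  obtain ⟨j, k, hjk, heq⟩ :=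
    Finite.exists_ne_map_eq_of_infinite (fun k => (⟨y k, hy k⟩ : ↥t))
  have hyeq : y j = y k := congrArg Subtype.val heq
  have hdist : dist (g j) (g k) < 2 * ε := by
    calc dist (g j) (g k) ≤ dist (g j) (y j) + dist (y k) (g k) := by
          rw [hyeq]; exact dist_triangle _ _ _
      _ < ε + ε := add_lt_add (Metric.mem_ball.1 (hball j)) (Metric.mem_ball'.1 (hball k))
      _ = 2 * ε := by ring
  have hSnorm : ‖S (fk j) - S (fk k)‖ < 2 * ε := by
    have : dist (g j) (g k) = ‖S (fk j) - S (fk k)‖ := by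
      rw [dist_eq_norm]
      rfl
    linarith [hdist, this.symm.le]
  rcases hjk.lt_or_gt with hlt | hlt
  · exact key j k hlt ε hε hSnorm
  · exact key k j hlt ε hε (by rwa [norm_sub_rev])

noncomputable def g0 : C(Icc (0:ℝ) 1, ℝ) := ContinuousMap.const _ (1/2)

noncomputable def S0 : Lp ℝ 1 mu01 →L[ℝ] C(Icc (0:ℝ) 1, ℝ) :=
  ContinuousLinearMap.smulRight (MeasureTheory.L1.integralCLM (α := ℝ) (μ := mu01) (E := ℝ)) g0

lemma S0_apply (f : Lp ℝ 1 mu01) (x : Icc (0:ℝ) 1) :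
    S0 f x = (∫ a, (f : ℝ → ℝ) a ∂mu01) * (1/2) := by
  rw [S0, ContinuousLinearMap.smulRight_apply, ContinuousMap.smul_apply]
  rw [← L1.integral_eq_integral, L1.integral_eq]
  simp [g0, smul_eq_mul]

lemma g0_ne_zero : g0 ≠ 0 := by
  intro h
  have : g0 ⟨0, by norm_num⟩ = 0 := by rw [h]; rfl
  simp [g0] at this

lemma S0_range_le : LinearMap.range (S0 : Lp ℝ 1 mu01 →ₗ[ℝ] C(Icc (0:ℝ) 1, ℝ)) ≤ ℝ ∙ g0 := by
  rintro x ⟨f, rfl⟩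
  exact Submodule.mem_span_singleton.2 ⟨L1.integralCLM f, rfl⟩

lemma S0_findim : FiniteDimensional ℝ (LinearMap.range (S0 : Lp ℝ 1 mu01 →ₗ[ℝ] C(Icc (0:ℝ) 1, ℝ))) :=
  Submodule.finiteDimensional_of_le S0_range_le

lemma S0_finrank_le : Module.finrank ℝ (LinearMap.range (S0 : Lp ℝ 1 mu01 →ₗ[ℝ] C(Icc (0:ℝ) 1, ℝ))) ≤ 1 := by
  have h1 := Submodule.finrank_mono (R := ℝ) S0_range_le
  rwa [finrank_span_singleton g0_ne_zero] at h1

lemma norm_V_sub_S0_le (V : Lp ℝ 1 mu01 →L[ℝ] C(Icc (0:ℝ) 1, ℝ))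
    (hV : ∀ (f : Lp ℝ 1 mu01) (x : Icc (0:ℝ) 1),
      V f x = ∫ t in Ioc (0:ℝ) (x:ℝ), (f : ℝ → ℝ) t ∂mu01) :
    ‖V - S0‖ ≤ 1/2 := by
  refine ContinuousLinearMap.opNorm_le_bound _ (by norm_num) (fun f => ?_)
  refine (ContinuousMap.norm_le _ (by positivity)).2 (fun x => ?_)
  have hint : Integrable (f : ℝ → ℝ) mu01 := L1.integrable_coeFn f
  set A := ∫ t in Ioc (0:ℝ) (x:ℝ), (f : ℝ → ℝ) t ∂mu01 with hA
  set B := ∫ t in (Ioc (0:ℝ) (x:ℝ))ᶜ, (f : ℝ → ℝ) t ∂mu01 with hB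
  have hT : A + B = ∫ a, (f : ℝ → ℝ) a ∂mu01 :=
    integral_add_compl measurableSet_Ioc hint
  have hAb : |A| ≤ ∫ t in Ioc (0:ℝ) (x:ℝ), ‖(f : ℝ → ℝ) t‖ ∂mu01 := by
    rw [← Real.norm_eq_abs]; exact norm_integral_le_integral_norm _
  have hBb : |B| ≤ ∫ t in (Ioc (0:ℝ) (x:ℝ))ᶜ, ‖(f : ℝ → ℝ) t‖ ∂mu01 := by
    rw [← Real.norm_eq_abs]; exact norm_integral_le_integral_norm _
  have hsum : (∫ t in Ioc (0:ℝ) (x:ℝ), ‖(f : ℝ → ℝ) t‖ ∂mu01)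
      + ∫ t in (Ioc (0:ℝ) (x:ℝ))ᶜ, ‖(f : ℝ → ℝ) t‖ ∂mu01 = ∫ a, ‖(f : ℝ → ℝ) a‖ ∂mu01 :=
    integral_add_compl measurableSet_Ioc hint.norm
  have hnorm : ∫ a, ‖(f : ℝ → ℝ) a‖ ∂mu01 = ‖f‖ := (L1.norm_eq_integral_norm f).symm
  have hval : ((V - S0) f) x = A - (A + B) * (1/2) := by
    rw [ContinuousLinearMap.sub_apply, ContinuousMap.sub_apply, hV, S0_apply, hT]
  rw [hval, Real.norm_eq_abs]
  have : A - (A + B) * (1/2) = (A - B) / 2 := by ring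
  rw [this, abs_div, abs_two]
  have habs : |A - B| ≤ |A| + |B| := by
    have := norm_sub_le A B
    simpa [Real.norm_eq_abs] using this
  linarith

/-- For every `n ≥ 2`, the `n`-th approximation number of the
Volterra operator `V : L¹([0,1]) → C([0,1])` equals `1/2`: the infimum of
`‖V - S‖` over all bounded operators `S` of rank at most `n - 1` is `1/2`. -/
theorem volterra_approximationNumber_eq_half
    (V : Lp ℝ 1 mu01 →L[ℝ] C(Icc (0:ℝ) 1, ℝ))
    (hV : ∀ (f : Lp ℝ 1 mu01) (x : Icc (0:ℝ) 1),
      V f x = ∫ t in Ioc (0:ℝ) (x:ℝ), (f : ℝ → ℝ) t ∂mu01)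
    (n : ℕ) (hn : 2 ≤ n) :
    sInf {c : ℝ | ∃ S : Lp ℝ 1 mu01 →L[ℝ] C(Icc (0:ℝ) 1, ℝ),
      FiniteDimensional ℝ (LinearMap.range (S : Lp ℝ 1 mu01 →ₗ[ℝ] C(Icc (0:ℝ) 1, ℝ))) ∧
      Module.finrank ℝ (LinearMap.range (S : Lp ℝ 1 mu01 →ₗ[ℝ] C(Icc (0:ℝ) 1, ℝ))) ≤ n - 1 ∧
      c = ‖V - S‖} = 1/2 := by
  set A := {c : ℝ | ∃ S : Lp ℝ 1 mu01 →L[ℝ] C(Icc (0:ℝ) 1, ℝ),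
      FiniteDimensional ℝ (LinearMap.range (S : Lp ℝ 1 mu01 →ₗ[ℝ] C(Icc (0:ℝ) 1, ℝ))) ∧
      Module.finrank ℝ (LinearMap.range (S : Lp ℝ 1 mu01 →ₗ[ℝ] C(Icc (0:ℝ) 1, ℝ))) ≤ n - 1 ∧
      c = ‖V - S‖} with hA
  have hlb : ∀ c ∈ A, (1/2 : ℝ) ≤ c := by
    rintro c ⟨S, hfin, -, rfl⟩
    exact lower_bound V S hV hfin
  have heq : ‖V - S0‖ = 1/2 :=
    le_antisymm (norm_V_sub_S0_le V hV) (lower_bound V S0 hV S0_findim)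
  have hmem : (1/2 : ℝ) ∈ A :=
    ⟨S0, S0_findim, le_trans S0_finrank_le (by omega), heq.symm⟩
  exact le_antisymm (csInf_le ⟨1/2, hlb⟩ hmem) (le_csInf ⟨1/2, hmem⟩ hlb)
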